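/- Entropy-Splitting for m variables (non-smooth case): Let X1, ..., Xm and Z be finite random variables such that H_min(Xi Xj | Z) >= α for all i ≠ j. Define V as the smallest index j such that P[Xj = xj | Z = z] >= 2^{-α/2} (for the realized values), and V = m if no such index exists. Let W be a random variable over {1,...,m} independent of (X1,...,Xm,Z,V) with H_min(W) >= 1. Then H_min(X_W | V, W, Z, V ≠ W) >= α/2 - log2(m) - 1. -/

import Mathlib

open Finset Real

set_option linter.unusedSectionVars false
set_option maxHeartbeats 1000000

section Helpers
variable {Ω 𝒳 𝒵 : Type} [Fintype Ω] [Fintype 𝒳] [Fintype 𝒵]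
    [DecidableEq 𝒳] [DecidableEq 𝒵]

lemma sum_if_nonneg (μ : Ω → ℝ) (h : ∀ ω, 0 ≤ μ ω)
    (P : Ω → Prop) [DecidablePred P] : 0 ≤ ∑ ω, if P ω then μ ω else 0 :=
  Finset.sum_nonneg fun ω _ => by by_cases hP : P ω <;> simp [hP, h ω]

lemma sum_if_mono (μ : Ω → ℝ) (h : ∀ ω, 0 ≤ μ ω)
    (P Q : Ω → Prop) [DecidablePred P] [DecidablePred Q] (hPQ : ∀ ω, P ω → Q ω) :
    (∑ ω, if P ω then μ ω else 0) ≤ ∑ ω, if Q ω then μ ω else 0 :=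
  Finset.sum_le_sum fun ω _ => by
    by_cases hP : P ω
    · simp [hP, hPQ ω hP]
    · by_cases hQ : Q ω <;> simp [hP, hQ, h ω]

lemma sum_if_congr (μ : Ω → ℝ) (P Q : Ω → Prop)
    [DecidablePred P] [DecidablePred Q] (h : ∀ ω, P ω ↔ Q ω) :
    (∑ ω, if P ω then μ ω else 0) = ∑ ω, if Q ω then μ ω else 0 :=
  Finset.sum_congr rfl fun ω _ => if_congr (h ω) rfl rfl

lemma partition_X {m : ℕ} (μ : Ω → ℝ) (X : Fin m → Ω → 𝒳) (v : Fin m)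
    (C : Ω → Prop) [DecidablePred C] :
    (∑ ω, if C ω then μ ω else 0)
      = ∑ y : 𝒳, ∑ ω, if X v ω = y ∧ C ω then μ ω else 0 := by
  symm
  rw [Finset.sum_comm]
  refine Finset.sum_congr rfl fun ω _ => ?_
  simp [ite_and]

lemma sum_PZ (μ : Ω → ℝ) (hμ1 : ∑ ω, μ ω = 1) (Z : Ω → 𝒵) :
    ∑ z, ∑ ω, (if Z ω = z then μ ω else 0) = 1 := by
  rw [Finset.sum_comm, ← hμ1]
  exact Finset.sum_congr rfl fun ω _ => by simp

lemma expand_lemma {m : ℕ} (μ : Ω → ℝ) (X : Fin m → Ω → 𝒳) (Z : Ω → 𝒵)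
    (P : Ω → Prop) [DecidablePred P] (Q : (Fin m → 𝒳) → 𝒵 → Prop)
    [∀ t z, Decidable (Q t z)] :
    (∑ ω, if P ω ∧ Q (fun i => X i ω) (Z ω) then μ ω else 0)
      = ∑ t : Fin m → 𝒳, ∑ z : 𝒵, if Q t z then
          (∑ ω, if P ω ∧ (∀ i, X i ω = t i) ∧ Z ω = z then μ ω else 0) else 0 := by
  classical
  have h1 : ∀ t z, (if Q t z then
      (∑ ω, if P ω ∧ (∀ i, X i ω = t i) ∧ Z ω = z then μ ω else 0) else 0)
      = ∑ ω, if Q t z ∧ P ω ∧ (∀ i, X i ω = t i) ∧ Z ω = z then μ ω else 0 := by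
    intro t z
    by_cases h : Q t z <;> simp [h]
  have h2 : ∀ ω, (∑ t : Fin m → 𝒳, ∑ z, if Q t z ∧ P ω ∧ (∀ i, X i ω = t i) ∧ Z ω = z
      then μ ω else 0) = if P ω ∧ Q (fun i => X i ω) (Z ω) then μ ω else 0 := by
    intro ω
    have ht : (∑ t : Fin m → 𝒳, ∑ z, if Q t z ∧ P ω ∧ (∀ i, X i ω = t i) ∧ Z ω = z
        then μ ω else 0)
        = ∑ z, if Q (fun i => X i ω) z ∧ P ω ∧ (∀ i, X i ω = X i ω) ∧ Z ω = z
            then μ ω else 0 := by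
      refine Finset.sum_eq_single _ (fun t _ htne => Finset.sum_eq_zero fun z _ =>
        if_neg ?_) (fun h => absurd (Finset.mem_univ _) h)
      rintro ⟨-, -, h, -⟩
      exact htne (funext fun i => (h i).symm)
    rw [ht]
    have hz : (∑ z, if Q (fun i => X i ω) z ∧ P ω ∧ (∀ i, X i ω = X i ω) ∧ Z ω = z
        then μ ω else 0)
        = if Q (fun i => X i ω) (Z ω) ∧ P ω ∧ (∀ i, X i ω = X i ω) ∧ Z ω = Z ω
            then μ ω else 0 := by
      refine Finset.sum_eq_single _ (fun z _ hzne => if_neg ?_)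
        (fun h => absurd (Finset.mem_univ _) h)
      rintro ⟨-, -, -, h⟩
      exact hzne h.symm
    rw [hz]
    exact if_congr ⟨fun ⟨a, b, _, _⟩ => ⟨b, a⟩, fun ⟨b, a⟩ => ⟨a, b, fun _ => rfl, rfl⟩⟩ rfl rfl
  calc (∑ ω, if P ω ∧ Q (fun i => X i ω) (Z ω) then μ ω else 0)
      = ∑ ω, ∑ t : Fin m → 𝒳, ∑ z, if Q t z ∧ P ω ∧ (∀ i, X i ω = t i) ∧ Z ω = z
          then μ ω else 0 := (Finset.sum_congr rfl fun ω _ => (h2 ω).symm)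
    _ = ∑ t : Fin m → 𝒳, ∑ ω, ∑ z, if Q t z ∧ P ω ∧ (∀ i, X i ω = t i) ∧ Z ω = z
          then μ ω else 0 := Finset.sum_comm
    _ = ∑ t : Fin m → 𝒳, ∑ z, ∑ ω, if Q t z ∧ P ω ∧ (∀ i, X i ω = t i) ∧ Z ω = z
          then μ ω else 0 := Finset.sum_congr rfl fun t _ => Finset.sum_comm
    _ = _ := Finset.sum_congr rfl fun t _ => Finset.sum_congr rfl fun z _ => (h1 t z).symm

lemma keybound {m : ℕ} [Nonempty 𝒳] (hm : 1 ≤ m)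
    (μ : Ω → ℝ) (hμ0 : ∀ ω, 0 ≤ μ ω) (hμ1 : ∑ ω, μ ω = 1)
    (X : Fin m → Ω → 𝒳) (Z : Ω → 𝒵) (V : Ω → Fin m) (α : ℝ)
    (hα : ∀ i j : Fin m, i ≠ j →
      ∑ z, Finset.univ.sup' Finset.univ_nonempty
        (fun p : 𝒳 × 𝒳 =>
          ∑ ω, if X i ω = p.1 ∧ X j ω = p.2 ∧ Z ω = z then μ ω else 0)
      ≤ (2:ℝ) ^ (-α))
    (hV : ∀ ω,
      (∀ j : Fin m, j < V ω →
        (∑ ω', if X j ω' = X j ω ∧ Z ω' = Z ω then μ ω' else 0)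
          < (2:ℝ) ^ (-α/2) * (∑ ω', if Z ω' = Z ω then μ ω' else 0)) ∧
      ((2:ℝ) ^ (-α/2) * (∑ ω', if Z ω' = Z ω then μ ω' else 0)
          ≤ (∑ ω', if X (V ω) ω' = X (V ω) ω ∧ Z ω' = Z ω then μ ω' else 0)
        ∨ V ω = ⟨m - 1, Nat.sub_lt hm Nat.one_pos⟩))
    (v w : Fin m) (hvw : v ≠ w) :
    (∑ z, Finset.univ.sup' Finset.univ_nonempty (fun x : 𝒳 =>
      ∑ ω, if X w ω = x ∧ V ω = v ∧ Z ω = z then μ ω else 0)) ≤ (2:ℝ)^(-α/2) := by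
  classical
  rcases lt_or_gt_of_ne hvw with hlt | hgt
  · -- v < w : counting argument
    have hvlast : (v : ℕ) < m - 1 := by
      have h1 := w.isLt
      have h2 : (v:ℕ) < (w:ℕ) := hlt
      omega
    set M : 𝒵 → ℝ := fun z => Finset.univ.sup' Finset.univ_nonempty
      (fun p : 𝒳 × 𝒳 => ∑ ω, if X v ω = p.1 ∧ X w ω = p.2 ∧ Z ω = z then μ ω else 0)
      with hM
    set L : 𝒵 → Finset 𝒳 := fun z => Finset.univ.filter (fun y =>
      (2:ℝ)^(-α/2) * (∑ ω, if Z ω = z then μ ω else 0)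
        ≤ ∑ ω, if X v ω = y ∧ Z ω = z then μ ω else 0) with hL
    have hMle : ∀ (z : 𝒵) (y x : 𝒳),
        (∑ ω, if X v ω = y ∧ X w ω = x ∧ Z ω = z then μ ω else 0) ≤ M z := by
      intro z y x
      simp only [hM]
      exact Finset.le_sup' (fun p : 𝒳 × 𝒳 =>
        ∑ ω, if X v ω = p.1 ∧ X w ω = p.2 ∧ Z ω = z then μ ω else 0) (Finset.mem_univ (y, x))
    have hMnn : ∀ z, 0 ≤ M z := by
      intro z
      obtain ⟨x⟩ := (inferInstance : Nonempty 𝒳)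
      exact le_trans (sum_if_nonneg μ hμ0 _) (hMle z x x)
    have stepa : ∀ z (x : 𝒳), (∑ ω, if X w ω = x ∧ V ω = v ∧ Z ω = z then μ ω else 0)
        ≤ ((L z).card : ℝ) * M z := by
      intro z x
      rw [partition_X μ X v (fun ω => X w ω = x ∧ V ω = v ∧ Z ω = z)]
      have hbound : ∀ y : 𝒳,
          (∑ ω, if X v ω = y ∧ (X w ω = x ∧ V ω = v ∧ Z ω = z) then μ ω else 0)
          ≤ if y ∈ L z then M z else 0 := by
        intro y
        by_cases hy : y ∈ L z
        · rw [if_pos hy]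
          refine le_trans ?_ (hMle z y x)
          exact sum_if_mono μ hμ0 _ _ fun ω h => ⟨h.1, h.2.1, h.2.2.2⟩
        · rw [if_neg hy]
          refine le_of_eq (Finset.sum_eq_zero fun ω _ => if_neg ?_)
          rintro ⟨h1, h2, h3, h4⟩
          rcases (hV ω).2 with h5 | h5
          · rw [h3, h1, h4] at h5
            exact hy (by simp only [hL]; exact Finset.mem_filter.2 ⟨Finset.mem_univ y, h5⟩)
          · rw [h3] at h5
            have h6 : (v:ℕ) = m - 1 := congrArg Fin.val h5
            omega
      refine le_trans (Finset.sum_le_sum fun y _ => hbound y) (le_of_eq ?_)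
      rw [Finset.sum_ite_mem, Finset.univ_inter, Finset.sum_const, nsmul_eq_mul]
    have stepb : ∀ z, ((L z).card : ℝ) * M z ≤ (2:ℝ)^(α/2) * M z := by
      intro z
      by_cases hpz : 0 < ∑ ω, if Z ω = z then μ ω else 0
      · have hcard : ((L z).card : ℝ)
            * ((2:ℝ)^(-α/2) * (∑ ω, if Z ω = z then μ ω else 0))
            ≤ ∑ ω, if Z ω = z then μ ω else 0 := by
          rw [← nsmul_eq_mul, ← Finset.sum_const]
          calc (∑ _y ∈ L z, (2:ℝ)^(-α/2) * (∑ ω, if Z ω = z then μ ω else 0))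
              ≤ ∑ y ∈ L z, ∑ ω, if X v ω = y ∧ Z ω = z then μ ω else 0 := by
                refine Finset.sum_le_sum fun y hy => ?_
                rw [hL] at hy
                exact (Finset.mem_filter.1 hy).2
            _ ≤ ∑ y : 𝒳, ∑ ω, if X v ω = y ∧ Z ω = z then μ ω else 0 :=
                Finset.sum_le_sum_of_subset_of_nonneg (Finset.subset_univ _)
                  (fun y _ _ => sum_if_nonneg μ hμ0 _)
            _ = ∑ ω, if Z ω = z then μ ω else 0 :=
                (partition_X μ X v (fun ω => Z ω = z)).symm
        have hpow : (0:ℝ) < (2:ℝ)^(-α/2) := Real.rpow_pos_of_pos (by norm_num) _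
        have hc : 0 < (2:ℝ)^(-α/2) * (∑ ω, if Z ω = z then μ ω else 0) :=
          mul_pos hpow hpz
        have heq : (2:ℝ)^(α/2) * ((2:ℝ)^(-α/2) * (∑ ω, if Z ω = z then μ ω else 0))
            = ∑ ω, if Z ω = z then μ ω else 0 := by
          rw [← mul_assoc, ← Real.rpow_add (by norm_num : (0:ℝ) < 2),
            show α/2 + -α/2 = 0 by ring, Real.rpow_zero, one_mul]
        have hc2 : ((L z).card : ℝ) ≤ (2:ℝ)^(α/2) :=
          le_of_mul_le_mul_right (hcard.trans_eq heq.symm) hc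
        exact mul_le_mul_of_nonneg_right hc2 (hMnn z)
      · have hpz0 : (∑ ω, if Z ω = z then μ ω else 0) = 0 :=
          le_antisymm (not_lt.mp hpz) (sum_if_nonneg μ hμ0 _)
        have hM0 : M z = 0 := by
          refine le_antisymm ?_ (hMnn z)
          simp only [hM]
          refine Finset.sup'_le _ _ fun p _ => ?_
          exact le_trans (sum_if_mono μ hμ0 _ _ fun ω h => h.2.2) (le_of_eq hpz0)
        rw [hM0, mul_zero, mul_zero]
    calc (∑ z, Finset.univ.sup' Finset.univ_nonempty (fun x : 𝒳 =>
          ∑ ω, if X w ω = x ∧ V ω = v ∧ Z ω = z then μ ω else 0))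
        ≤ ∑ z, ((L z).card : ℝ) * M z :=
          Finset.sum_le_sum fun z _ => Finset.sup'_le _ _ fun x _ => stepa z x
      _ ≤ ∑ z, (2:ℝ)^(α/2) * M z := Finset.sum_le_sum fun z _ => stepb z
      _ = (2:ℝ)^(α/2) * ∑ z, M z := by rw [Finset.mul_sum]
      _ ≤ (2:ℝ)^(α/2) * (2:ℝ)^(-α) := by
          refine mul_le_mul_of_nonneg_left ?_ (Real.rpow_nonneg (by norm_num) _)
          simp only [hM]
          exact hα v w hvw
      _ = (2:ℝ)^(-α/2) := by
          rw [← Real.rpow_add (by norm_num : (0:ℝ) < 2)]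
          congr 1
          ring
  · -- w < v : every x has small probability
    have hz : ∀ z, Finset.univ.sup' Finset.univ_nonempty (fun x : 𝒳 =>
        ∑ ω, if X w ω = x ∧ V ω = v ∧ Z ω = z then μ ω else 0)
        ≤ (2:ℝ)^(-α/2) * ∑ ω, if Z ω = z then μ ω else 0 := by
      intro z
      refine Finset.sup'_le _ _ fun x _ => ?_
      by_cases hex : ∃ ω₀, X w ω₀ = x ∧ V ω₀ = v ∧ Z ω₀ = z
      · obtain ⟨ω₀, hx, hv0, hz0⟩ := hex
        have hsm := (hV ω₀).1 w (by rw [hv0]; exact hgt)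
        rw [hx, hz0] at hsm
        calc (∑ ω, if X w ω = x ∧ V ω = v ∧ Z ω = z then μ ω else 0)
            ≤ ∑ ω', if X w ω' = x ∧ Z ω' = z then μ ω' else 0 :=
              sum_if_mono μ hμ0 _ _ fun ω h => ⟨h.1, h.2.2⟩
          _ ≤ _ := le_of_lt hsm
      · have h0 : (∑ ω, if X w ω = x ∧ V ω = v ∧ Z ω = z then μ ω else 0) = 0 :=
          Finset.sum_eq_zero fun ω _ => if_neg fun h => hex ⟨ω, h⟩
        rw [h0]
        exact mul_nonneg (Real.rpow_nonneg (by norm_num) _) (sum_if_nonneg μ hμ0 _)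
    calc (∑ z, Finset.univ.sup' Finset.univ_nonempty (fun x : 𝒳 =>
          ∑ ω, if X w ω = x ∧ V ω = v ∧ Z ω = z then μ ω else 0))
        ≤ ∑ z, (2:ℝ)^(-α/2) * ∑ ω, if Z ω = z then μ ω else 0 :=
          Finset.sum_le_sum fun z _ => hz z
      _ = (2:ℝ)^(-α/2) * ∑ z, ∑ ω, if Z ω = z then μ ω else 0 := by
          rw [Finset.mul_sum]
      _ = (2:ℝ)^(-α/2) := by rw [sum_PZ μ hμ1 Z, mul_one]

end Helpers

/-- Entropy-Splitting for `m` variables (non-smooth case).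
If `H_min(Xi Xj | Z) ≥ α` for all `i ≠ j`, `V` is the smallest index `j` with
`P[Xj = xj | Z = z] ≥ 2^(-α/2)` (and `V = m`, i.e. the last index, if no such
index exists), and `W` is independent of `(X, Z)` (hence of `V`, a function of
`(X, Z)`) with `H_min(W) ≥ 1`, then `H_min(X_W | V, W, Z, V ≠ W) ≥ α/2 - log2 m - 1`,
i.e. the conditional guessing probability given the event `V ≠ W` is at most
`2^(-(α/2 - log2 m - 1))`. -/
theorem entropy_splitting_m_variables
    {Ω 𝒳 𝒵 : Type} [Fintype Ω] [Fintype 𝒳] [Fintype 𝒵]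
    [DecidableEq 𝒳] [DecidableEq 𝒵] [Nonempty 𝒳]
    {m : ℕ} (hm : 1 ≤ m)
    (μ : Ω → ℝ) (hμ0 : ∀ ω, 0 ≤ μ ω) (hμ1 : ∑ ω, μ ω = 1)
    (X : Fin m → Ω → 𝒳) (Z : Ω → 𝒵) (V W : Ω → Fin m) (α : ℝ)
    -- joint min-entropy assumption: H_min(Xi Xj | Z) ≥ α for all i ≠ j
    (hα : ∀ i j : Fin m, i ≠ j →
      ∑ z, Finset.univ.sup' Finset.univ_nonempty
        (fun p : 𝒳 × 𝒳 =>
          ∑ ω, if X i ω = p.1 ∧ X j ω = p.2 ∧ Z ω = z then μ ω else 0)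
      ≤ (2:ℝ) ^ (-α))
    -- defining property of V: all indices before V ω have small conditional
    -- probability, and either V ω itself has large conditional probability or
    -- V ω is the last index
    (hV : ∀ ω,
      (∀ j : Fin m, j < V ω →
        (∑ ω', if X j ω' = X j ω ∧ Z ω' = Z ω then μ ω' else 0)
          < (2:ℝ) ^ (-α/2) * (∑ ω', if Z ω' = Z ω then μ ω' else 0)) ∧
      ((2:ℝ) ^ (-α/2) * (∑ ω', if Z ω' = Z ω then μ ω' else 0)
          ≤ (∑ ω', if X (V ω) ω' = X (V ω) ω ∧ Z ω' = Z ω then μ ω' else 0)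
        ∨ V ω = ⟨m - 1, by omega⟩))
    -- W is independent of (X1, ..., Xm, Z) (and hence of V)
    (hWindep : ∀ (w : Fin m) (x : Fin m → 𝒳) (z : 𝒵),
      (∑ ω, if W ω = w ∧ (∀ i, X i ω = x i) ∧ Z ω = z then μ ω else 0)
        = (∑ ω, if W ω = w then μ ω else 0)
          * (∑ ω, if (∀ i, X i ω = x i) ∧ Z ω = z then μ ω else 0))
    -- H_min(W) ≥ 1
    (hWmin : ∀ w : Fin m, (∑ ω, if W ω = w then μ ω else 0) ≤ 1/2) :
    ∑ v : Fin m, ∑ w : Fin m, ∑ z,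
      Finset.univ.sup' Finset.univ_nonempty
        (fun x => ∑ ω,
          if X (W ω) ω = x ∧ V ω = v ∧ W ω = w ∧ Z ω = z ∧ v ≠ w
          then μ ω else 0)
    ≤ (2:ℝ) ^ (-(α/2 - Real.logb 2 m - 1))
        * (∑ ω, if V ω ≠ W ω then μ ω else 0) := by
  classical
  -- V is a function of (X, Z)
  have hVle : ∀ ω₁ ω₂, (∀ i, X i ω₁ = X i ω₂) → Z ω₁ = Z ω₂ → V ω₁ ≤ V ω₂ := by
    intro ω₁ ω₂ hX hZ
    by_contra hlt
    push_neg at hlt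
    have h1 := (hV ω₁).1 (V ω₂) hlt
    rw [hX (V ω₂), hZ] at h1
    rcases (hV ω₂).2 with h2 | h2
    · linarith
    · have h3 := (V ω₁).isLt
      have h4 : (V ω₂ : ℕ) < (V ω₁ : ℕ) := hlt
      have h5 : (V ω₂ : ℕ) = m - 1 := congrArg Fin.val h2
      omega
  have hVcongr : ∀ ω₁ ω₂, (∀ i, X i ω₁ = X i ω₂) → Z ω₁ = Z ω₂ → V ω₁ = V ω₂ :=
    fun ω₁ ω₂ hX hZ => le_antisymm (hVle ω₁ ω₂ hX hZ)
      (hVle ω₂ ω₁ (fun i => (hX i).symm) hZ.symm)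
  obtain ⟨f, hVf⟩ : ∃ f : (Fin m → 𝒳) → 𝒵 → Fin m,
      ∀ ω, f (fun i => X i ω) (Z ω) = V ω := by
    refine ⟨fun t z => if h : ∃ ω, (∀ i, X i ω = t i) ∧ Z ω = z
      then V h.choose else ⟨0, hm⟩, fun ω => ?_⟩
    have hex : ∃ ω', (∀ i, X i ω' = X i ω) ∧ Z ω' = Z ω := ⟨ω, fun i => rfl, rfl⟩
    simp only [dif_pos hex]
    exact hVcongr _ _ hex.choose_spec.1 hex.choose_spec.2
  -- independence extension to events of (X, Z)
  have indep : ∀ (w : Fin m) (Q : (Fin m → 𝒳) → 𝒵 → Prop) (_ : ∀ t z, Decidable (Q t z)),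
      (∑ ω, if W ω = w ∧ Q (fun i => X i ω) (Z ω) then μ ω else 0)
        = (∑ ω, if W ω = w then μ ω else 0)
          * (∑ ω, if Q (fun i => X i ω) (Z ω) then μ ω else 0) := by
    intro w Q _
    rw [expand_lemma μ X Z (fun ω => W ω = w) Q]
    have e2' : (∑ ω, if Q (fun i => X i ω) (Z ω) then μ ω else 0)
        = ∑ t : Fin m → 𝒳, ∑ z : 𝒵, if Q t z then
            (∑ ω, if (∀ i, X i ω = t i) ∧ Z ω = z then μ ω else 0) else 0 := by
      rw [show (∑ ω, if Q (fun i => X i ω) (Z ω) then μ ω else 0)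
          = (∑ ω, if True ∧ Q (fun i => X i ω) (Z ω) then μ ω else 0) from
          sum_if_congr μ _ _ (fun ω => by simp),
        expand_lemma μ X Z (fun _ => True) Q]
      exact Finset.sum_congr rfl fun t _ => Finset.sum_congr rfl fun z _ =>
        if_congr Iff.rfl (sum_if_congr μ _ _ fun ω => by simp) rfl
    rw [e2', Finset.mul_sum]
    refine Finset.sum_congr rfl fun t _ => ?_
    rw [Finset.mul_sum]
    refine Finset.sum_congr rfl fun z _ => ?_
    by_cases h : Q t z
    · simp only [if_pos h]
      exact hWindep w t z
    · simp [h]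
  have PWnn : ∀ w, 0 ≤ ∑ ω, if W ω = w then μ ω else 0 :=
    fun w => sum_if_nonneg μ hμ0 _
  have PWsum : (∑ w : Fin m, ∑ ω, if W ω = w then μ ω else 0) = 1 := sum_PZ μ hμ1 W
  -- per-pair bound
  have pairbound : ∀ v w : Fin m, v ≠ w →
      (∑ z, Finset.univ.sup' Finset.univ_nonempty (fun x : 𝒳 =>
        ∑ ω, if X (W ω) ω = x ∧ V ω = v ∧ W ω = w ∧ Z ω = z ∧ v ≠ w then μ ω else 0))
      ≤ (∑ ω, if W ω = w then μ ω else 0) * (2:ℝ)^(-α/2) := by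
    intro v w hvw
    have hS : ∀ (z : 𝒵) (x : 𝒳),
        (∑ ω, if X (W ω) ω = x ∧ V ω = v ∧ W ω = w ∧ Z ω = z ∧ v ≠ w then μ ω else 0)
        = (∑ ω, if W ω = w then μ ω else 0)
          * (∑ ω, if X w ω = x ∧ V ω = v ∧ Z ω = z then μ ω else 0) := by
      intro z x
      have h1 : (∑ ω, if X (W ω) ω = x ∧ V ω = v ∧ W ω = w ∧ Z ω = z ∧ v ≠ w then μ ω else 0)
          = ∑ ω, if W ω = w ∧ ((fun i => X i ω) w = x ∧ f (fun i => X i ω) (Z ω) = v ∧ Z ω = z)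
              then μ ω else 0 := by
        refine sum_if_congr μ _ _ fun ω => ?_
        rw [hVf ω]
        constructor
        · rintro ⟨ha, hb, hc, hd, -⟩
          rw [hc] at ha
          exact ⟨hc, ha, hb, hd⟩
        · rintro ⟨hc, ha, hb, hd⟩
          rw [← hc] at ha
          exact ⟨ha, hb, hc, hd, hvw⟩
      rw [h1, indep w (fun t z' => t w = x ∧ f t z' = v ∧ z' = z) (fun _ _ => inferInstance)]
      congr 1
      refine sum_if_congr μ _ _ fun ω => ?_
      rw [hVf ω]
    have h2 : ∀ z : 𝒵, Finset.univ.sup' Finset.univ_nonempty (fun x : 𝒳 =>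
        ∑ ω, if X (W ω) ω = x ∧ V ω = v ∧ W ω = w ∧ Z ω = z ∧ v ≠ w then μ ω else 0)
        ≤ (∑ ω, if W ω = w then μ ω else 0)
          * Finset.univ.sup' Finset.univ_nonempty (fun x : 𝒳 =>
              ∑ ω, if X w ω = x ∧ V ω = v ∧ Z ω = z then μ ω else 0) := by
      intro z
      refine Finset.sup'_le _ _ fun x _ => ?_
      rw [hS z x]
      refine mul_le_mul_of_nonneg_left ?_ (PWnn w)
      exact Finset.le_sup' (fun x : 𝒳 =>
        ∑ ω, if X w ω = x ∧ V ω = v ∧ Z ω = z then μ ω else 0) (Finset.mem_univ x)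
    calc (∑ z, Finset.univ.sup' Finset.univ_nonempty (fun x : 𝒳 =>
          ∑ ω, if X (W ω) ω = x ∧ V ω = v ∧ W ω = w ∧ Z ω = z ∧ v ≠ w then μ ω else 0))
        ≤ ∑ z, (∑ ω, if W ω = w then μ ω else 0)
            * Finset.univ.sup' Finset.univ_nonempty (fun x : 𝒳 =>
                ∑ ω, if X w ω = x ∧ V ω = v ∧ Z ω = z then μ ω else 0) :=
          Finset.sum_le_sum fun z _ => h2 z
      _ = (∑ ω, if W ω = w then μ ω else 0)
            * ∑ z, Finset.univ.sup' Finset.univ_nonempty (fun x : 𝒳 =>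
                ∑ ω, if X w ω = x ∧ V ω = v ∧ Z ω = z then μ ω else 0) :=
          (Finset.mul_sum _ _ _).symm
      _ ≤ (∑ ω, if W ω = w then μ ω else 0) * (2:ℝ)^(-α/2) :=
          mul_le_mul_of_nonneg_left (keybound hm μ hμ0 hμ1 X Z V α hα hV v w hvw) (PWnn w)
  -- main bound
  have main : (∑ v : Fin m, ∑ w : Fin m, ∑ z,
      Finset.univ.sup' Finset.univ_nonempty
        (fun x => ∑ ω,
          if X (W ω) ω = x ∧ V ω = v ∧ W ω = w ∧ Z ω = z ∧ v ≠ w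
          then μ ω else 0)) ≤ (m:ℝ) * (2:ℝ)^(-α/2) := by
    have hvw : ∀ v w : Fin m, (∑ z, Finset.univ.sup' Finset.univ_nonempty (fun x : 𝒳 =>
        ∑ ω, if X (W ω) ω = x ∧ V ω = v ∧ W ω = w ∧ Z ω = z ∧ v ≠ w then μ ω else 0))
        ≤ (∑ ω, if W ω = w then μ ω else 0) * (2:ℝ)^(-α/2) := by
      intro v w
      by_cases h : v = w
      · have hz : ∀ z : 𝒵, Finset.univ.sup' Finset.univ_nonempty (fun x : 𝒳 =>
            ∑ ω, if X (W ω) ω = x ∧ V ω = v ∧ W ω = w ∧ Z ω = z ∧ v ≠ w then μ ω else 0) ≤ 0 :=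
          fun z => Finset.sup'_le _ _ fun x _ => le_of_eq (Finset.sum_eq_zero fun ω _ =>
            if_neg (by rintro ⟨-, -, -, -, hne⟩; exact hne h))
        calc (∑ z, Finset.univ.sup' Finset.univ_nonempty (fun x : 𝒳 =>
              ∑ ω, if X (W ω) ω = x ∧ V ω = v ∧ W ω = w ∧ Z ω = z ∧ v ≠ w then μ ω else 0))
            ≤ ∑ _z : 𝒵, (0:ℝ) := Finset.sum_le_sum fun z _ => hz z
          _ = 0 := by simp
          _ ≤ _ := mul_nonneg (PWnn w) (Real.rpow_nonneg (by norm_num) _)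
      · exact pairbound v w h
    calc (∑ v : Fin m, ∑ w : Fin m, ∑ z,
        Finset.univ.sup' Finset.univ_nonempty
          (fun x => ∑ ω,
            if X (W ω) ω = x ∧ V ω = v ∧ W ω = w ∧ Z ω = z ∧ v ≠ w
            then μ ω else 0))
        ≤ ∑ _v : Fin m, ∑ w : Fin m, (∑ ω, if W ω = w then μ ω else 0) * (2:ℝ)^(-α/2) :=
          Finset.sum_le_sum fun v _ => Finset.sum_le_sum fun w _ => hvw v w
      _ = ∑ _v : Fin m, (2:ℝ)^(-α/2) := by
          refine Finset.sum_congr rfl fun v _ => ?_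
          rw [← Finset.sum_mul, PWsum, one_mul]
      _ = (m:ℝ) * (2:ℝ)^(-α/2) := by
          rw [Finset.sum_const, Finset.card_univ, Fintype.card_fin, nsmul_eq_mul]
  -- P[V ≠ W] ≥ 1/2
  have hVW : (1/2 : ℝ) ≤ ∑ ω, if V ω ≠ W ω then μ ω else 0 := by
    have hEq : (∑ ω, if V ω = W ω then μ ω else 0)
        = ∑ v : Fin m, ∑ ω, if W ω = v ∧ V ω = v then μ ω else 0 := by
      symm
      rw [Finset.sum_comm]
      refine Finset.sum_congr rfl fun ω _ => ?_
      simp [ite_and]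
    have hterm : ∀ v : Fin m, (∑ ω, if W ω = v ∧ V ω = v then μ ω else 0)
        = (∑ ω, if W ω = v then μ ω else 0) * (∑ ω, if V ω = v then μ ω else 0) := by
      intro v
      have h1 : (∑ ω, if W ω = v ∧ V ω = v then μ ω else 0)
          = ∑ ω, if W ω = v ∧ f (fun i => X i ω) (Z ω) = v then μ ω else 0 :=
        sum_if_congr μ _ _ fun ω => by rw [hVf ω]
      rw [h1, indep v (fun t z => f t z = v) (fun _ _ => inferInstance)]
      congr 1
      exact sum_if_congr μ _ _ fun ω => by rw [hVf ω]
    have hPVsum : (∑ v : Fin m, ∑ ω, if V ω = v then μ ω else 0) = 1 := sum_PZ μ hμ1 V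
    have hle : (∑ ω, if V ω = W ω then μ ω else 0) ≤ 1/2 := by
      rw [hEq]
      calc (∑ v : Fin m, ∑ ω, if W ω = v ∧ V ω = v then μ ω else 0)
          ≤ ∑ v : Fin m, (1/2) * (∑ ω, if V ω = v then μ ω else 0) := by
            refine Finset.sum_le_sum fun v _ => ?_
            rw [hterm v]
            exact mul_le_mul_of_nonneg_right (hWmin v) (sum_if_nonneg μ hμ0 _)
        _ = 1/2 := by rw [← Finset.mul_sum, hPVsum, mul_one]
    have hsplit : (∑ ω, if V ω ≠ W ω then μ ω else 0)
        = 1 - ∑ ω, if V ω = W ω then μ ω else 0 := by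
      rw [← hμ1, ← Finset.sum_sub_distrib]
      refine Finset.sum_congr rfl fun ω _ => ?_
      by_cases h : V ω = W ω <;> simp [h]
    rw [hsplit]
    linarith
  -- final comparison
  have hfin : (m:ℝ) * (2:ℝ)^(-α/2)
      ≤ (2:ℝ) ^ (-(α/2 - Real.logb 2 m - 1)) * (∑ ω, if V ω ≠ W ω then μ ω else 0) := by
    have hm0 : (0:ℝ) < m := by exact_mod_cast hm
    have hexp : (2:ℝ)^(-(α/2 - Real.logb 2 (m:ℝ) - 1)) = (2:ℝ)^(-α/2) * m * 2 := by
      rw [show -(α/2 - Real.logb 2 (m:ℝ) - 1) = -α/2 + Real.logb 2 (m:ℝ) + 1 by ring,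
        Real.rpow_add (by norm_num : (0:ℝ) < 2), Real.rpow_add (by norm_num : (0:ℝ) < 2),
        Real.rpow_logb (by norm_num) (by norm_num) hm0, Real.rpow_one]
    rw [hexp]
    have hp : (0:ℝ) ≤ (2:ℝ)^(-α/2) := Real.rpow_nonneg (by norm_num) _
    nlinarith [mul_nonneg (mul_nonneg hp hm0.le)
      (show (0:ℝ) ≤ 2 * (∑ ω, if V ω ≠ W ω then μ ω else 0) - 1 by linarith)]
  exact le_trans main hfin
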